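/- Pointed ω-sequence models (σ,W,V) and (τ,W',V') verify exactly the same sentences of L whenever for all j,k ∈ ℕ: σ[j:] ∈ V(p_k) if and only if τ[j:] ∈ V'(p_k). -/
import Mathlib


/-- Sentences of the language L: atoms p₀,p₁,…, negation, conjunction, and the
binary conditional `>` (written `cond`). -/
inductive Formula : Type
  | atom : ℕ → Formula
  | neg : Formula → Formula
  | conj : Formula → Formula → Formula
  | cond : Formula → Formula → Formula
  deriving DecidableEq

namespace Formula

/-- Material implication, defined as usual: p → q := ¬(p ∧ ¬q). -/
def impl (p q : Formula) : Formula := (p.conj q.neg).neg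
/-- Disjunction, defined as usual: p ∨ q := ¬(¬p ∧ ¬q). -/
def disj (p q : Formula) : Formula := (p.neg.conj q.neg).neg
/-- Material biconditional, defined as usual. -/
def biimp (p q : Formula) : Formula := (p.impl q).conj (q.impl p)
/-- □p abbreviates ¬p > p. -/
def box (p : Formula) : Formula := p.neg.cond p
/-- ◇p abbreviates ¬□¬p. -/
def dia (p : Formula) : Formula := p.neg.box.neg
/-- ⊥ abbreviates p₀ ∧ ¬p₀. -/
def bot : Formula := (atom 0).conj (atom 0).neg

end Formula

/-- The `n`-th tail of an ω-sequence: σ[n:](m) = σ(n+m). -/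
def seqTail {P : Type} (σ : ℕ → P) (n : ℕ) : ℕ → P := fun m => σ (n + m)

/-- `W` is closed under tailhood: if it contains σ then it contains every tail
of σ. -/
def OmegaClosed {P : Type} (W : Set (ℕ → P)) : Prop :=
  ∀ σ ∈ W, ∀ n, seqTail σ n ∈ W

/-- Truth at an ω-sequence of an ω-sequence model: atoms via the valuation,
Booleans classically, and `p > q` is true at σ iff either no tail of σ in `W`
satisfies `p`, or `q` is true at the first (least-rank) tail of σ in `W`
satisfying `p`. -/
def OmegaTruth {P : Type} (W : Set (ℕ → P)) (V : ℕ → Set (ℕ → P)) :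
    Formula → (ℕ → P) → Prop
  | .atom k, σ => σ ∈ V k
  | .neg p, σ => ¬ OmegaTruth W V p σ
  | .conj p q, σ => OmegaTruth W V p σ ∧ OmegaTruth W V q σ
  | .cond p q, σ =>
      (∀ n, seqTail σ n ∈ W → ¬ OmegaTruth W V p (seqTail σ n)) ∨
      ∃ n, seqTail σ n ∈ W ∧ OmegaTruth W V p (seqTail σ n) ∧
        OmegaTruth W V q (seqTail σ n) ∧
        ∀ m < n, ¬ (seqTail σ m ∈ W ∧ OmegaTruth W V p (seqTail σ m))

/-- pointed ω-sequence models (σ,W,V) and (τ,W',V') verify exactly the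
same sentences of L whenever for all j,k ∈ ℕ: σ[j:] ∈ V(p_k) iff τ[j:] ∈ V'(p_k). -/
lemma seqTail_seqTail {P : Type} (σ : ℕ → P) (j n : ℕ) :
    seqTail (seqTail σ j) n = seqTail σ (j + n) := by
  funext m; simp [seqTail, Nat.add_assoc]

/-- pointed ω-sequence models (σ,W,V) and (τ,W',V') verify exactly the
same sentences of L whenever for all j,k ∈ ℕ: σ[j:] ∈ V(p_k) iff τ[j:] ∈ V'(p_k). -/
theorem omega_models_equivalent {P P' : Type} [Nonempty P] [Nonempty P']
    (W : Set (ℕ → P)) (W' : Set (ℕ → P'))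
    (hW : OmegaClosed W) (hW' : OmegaClosed W')
    (V : ℕ → Set (ℕ → P)) (V' : ℕ → Set (ℕ → P'))
    (σ : ℕ → P) (τ : ℕ → P') (hσ : σ ∈ W) (hτ : τ ∈ W')
    (h : ∀ j k : ℕ, seqTail σ j ∈ V k ↔ seqTail τ j ∈ V' k) :
    ∀ p : Formula, OmegaTruth W V p σ ↔ OmegaTruth W' V' p τ := by
  have key : ∀ p : Formula, ∀ j,
      OmegaTruth W V p (seqTail σ j) ↔ OmegaTruth W' V' p (seqTail τ j) := by
    intro p
    induction p with
    | atom k => intro j; exact h j k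
    | neg p ih => intro j; simp only [OmegaTruth]; rw [ih j]
    | conj p q ihp ihq => intro j; simp only [OmegaTruth]; rw [ihp j, ihq j]
    | cond p q ihp ihq =>
      intro j
      simp only [OmegaTruth, seqTail_seqTail]
      constructor
      · rintro (h1 | ⟨n, _, h2, h3, h4⟩)
        · left; intro n hn
          rw [← ihp (j + n)]; exact h1 n (hW σ hσ (j + n))
        · right; exact ⟨n, hW' τ hτ (j + n), (ihp (j + n)).1 h2, (ihq (j + n)).1 h3,
            fun m hm hc => h4 m hm ⟨hW σ hσ (j + m), (ihp (j + m)).2 hc.2⟩⟩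
      · rintro (h1 | ⟨n, _, h2, h3, h4⟩)
        · left; intro n hn
          rw [ihp (j + n)]; exact h1 n (hW' τ hτ (j + n))
        · right; exact ⟨n, hW σ hσ (j + n), (ihp (j + n)).2 h2, (ihq (j + n)).2 h3,
            fun m hm hc => h4 m hm ⟨hW' τ hτ (j + m), (ihp (j + m)).1 hc.2⟩⟩
  intro p
  have h0σ : seqTail σ 0 = σ := by funext m; simp [seqTail]
  have h0τ : seqTail τ 0 = τ := by funext m; simp [seqTail]
  have := key p 0
  rwa [h0σ, h0τ] at this
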